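/- Let A be a Hermitian n×n complex matrix. Define v(A) as the positive square root of γ(-ad A) restricted to Hermitian matrices, where γ(B) = Σ_{m≥0} B^m/(m+1)!. Then γ(-ad A), as an operator on the space of Hermitian matrices equipped with the Hilbert–Schmidt inner product, is self-adjoint and positive semidefinite, so v(A) is well-defined. -/

import Mathlib

open Matrix

lemma summable_gAux (x : ℝ) :
    Summable (fun m : ℕ => (((m + 1).factorial : ℝ))⁻¹ * x ^ m) := by
  refine Summable.of_norm_bounded (Real.summable_pow_div_factorial |x|) (fun m => ?_)
  rw [norm_mul, norm_pow, Real.norm_eq_abs, Real.norm_eq_abs, abs_inv,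
    abs_of_nonneg (by positivity : (0:ℝ) ≤ ((m+1).factorial : ℝ)), div_eq_inv_mul]
  gcongr
  exact Nat.le_succ m

noncomputable def gAux (x : ℝ) : ℝ := ∑' m : ℕ, (((m + 1).factorial : ℝ))⁻¹ * x ^ m

lemma gAux_nonneg (x : ℝ) : 0 ≤ gAux x := by
  have hs := summable_gAux x
  have hexp : Real.exp x - 1 = x * gAux x := by
    have h1 : Real.exp x = ∑' m : ℕ, x ^ m / m.factorial := by
      rw [Real.exp_eq_exp_ℝ, NormedSpace.exp_eq_tsum_div]
    have h2 : Summable (fun m : ℕ => x ^ m / (m.factorial : ℝ)) :=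
      Real.summable_pow_div_factorial x
    rw [h1, h2.tsum_eq_zero_add]
    simp only [pow_zero, Nat.factorial_zero, Nat.cast_one, div_one]
    rw [add_sub_cancel_left, gAux, ← tsum_mul_left]
    congr 1
    ext m
    rw [pow_succ']
    field_simp
  rcases lt_trichotomy x 0 with hx | hx | hx
  · have : gAux x = (Real.exp x - 1) / x := by
      rw [hexp, mul_div_cancel_left₀ _ (ne_of_lt hx)]
    rw [this]
    exact div_nonneg_of_nonpos (sub_nonpos.mpr (Real.exp_le_one_iff.mpr hx.le)) hx.le
  · subst hx
    rw [gAux, tsum_eq_single 0 (fun m hm => by simp [zero_pow hm])]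
    simp
  · have : gAux x = (Real.exp x - 1) / x := by
      rw [hexp, mul_div_cancel_left₀ _ (ne_of_gt hx)]
    rw [this]
    apply div_nonneg _ hx.le
    simp only [sub_nonneg]
    exact Real.one_le_exp hx.le

lemma iter_diag {n : ℕ} (d : Fin n → ℝ) (W : Matrix (Fin n) (Fin n) ℂ) (m : ℕ) (i j : Fin n) :
    ((fun Z => Z * diagonal (fun k => (d k : ℂ)) - diagonal (fun k => (d k : ℂ)) * Z)^[m] W) i j
      = ((d j : ℂ) - (d i : ℂ)) ^ m * W i j := by
  induction m generalizing W with
  | zero => simp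
  | succ m ih =>
    rw [Function.iterate_succ_apply, ih]
    simp only [Matrix.sub_apply, Matrix.mul_diagonal, Matrix.diagonal_mul, pow_succ]
    ring

lemma hasSum_diag {n : ℕ} (d : Fin n → ℝ) (W : Matrix (Fin n) (Fin n) ℂ) :
    HasSum (fun m : ℕ => (((m + 1).factorial : ℂ))⁻¹ •
        ((fun Z => Z * diagonal (fun k => (d k : ℂ)) - diagonal (fun k => (d k : ℂ)) * Z)^[m] W))
      (Matrix.of fun i j => ((gAux (d j - d i) : ℝ) : ℂ) * W i j) := by
  refine Pi.hasSum.mpr fun i => Pi.hasSum.mpr fun j => ?_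
  have h0 : HasSum (fun m : ℕ => (((m + 1).factorial : ℝ))⁻¹ * (d j - d i) ^ m)
      (gAux (d j - d i)) := (summable_gAux _).hasSum
  have h1 := h0.mapL Complex.ofRealCLM
  simp only [Complex.ofRealCLM_apply, Function.comp_def, Complex.ofReal_mul, Complex.ofReal_inv,
    Complex.ofReal_natCast, Complex.ofReal_pow, Complex.ofReal_sub] at h1
  have h2 := h1.mul_right (W i j)
  convert h2 using 2 with m
  · rfl
  · simp only [Matrix.smul_apply, smul_eq_mul, iter_diag]
    ring
  · rfl

lemma conj_step {n : ℕ} (U L : Matrix (Fin n) (Fin n) ℂ) (hU : U * star U = 1)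
    (hU' : star U * U = 1) (Z : Matrix (Fin n) (Fin n) ℂ) :
    Z * (U * L * star U) - (U * L * star U) * Z
      = U * ((star U * Z * U) * L - L * (star U * Z * U)) * star U := by
  have h1 : ∀ M : Matrix (Fin n) (Fin n) ℂ, U * (star U * M) = M := fun M => by
    rw [← Matrix.mul_assoc, hU, Matrix.one_mul]
  have h2 : ∀ M : Matrix (Fin n) (Fin n) ℂ, star U * (U * M) = M := fun M => by
    rw [← Matrix.mul_assoc, hU', Matrix.one_mul]
  simp only [Matrix.mul_sub, Matrix.sub_mul, Matrix.mul_assoc, h1, h2, hU, hU',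
    Matrix.mul_one, Matrix.one_mul]

lemma conj_iter {n : ℕ} (U L : Matrix (Fin n) (Fin n) ℂ) (hU : U * star U = 1)
    (hU' : star U * U = 1) (Y : Matrix (Fin n) (Fin n) ℂ) (m : ℕ) :
    (fun Z => Z * (U * L * star U) - (U * L * star U) * Z)^[m] Y
      = U * ((fun Z => Z * L - L * Z)^[m] (star U * Y * U)) * star U := by
  have h1 : ∀ M : Matrix (Fin n) (Fin n) ℂ, U * (star U * M) = M := fun M => by
    rw [← Matrix.mul_assoc, hU, Matrix.one_mul]
  have h2 : ∀ M : Matrix (Fin n) (Fin n) ℂ, star U * (U * M) = M := fun M => by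
    rw [← Matrix.mul_assoc, hU', Matrix.one_mul]
  induction m with
  | zero =>
    simp only [Function.iterate_zero, id]
    simp only [Matrix.mul_assoc, h1, h2, hU, hU', Matrix.mul_one]
  | succ m ih =>
    rw [Function.iterate_succ_apply', ih, Function.iterate_succ_apply']
    rw [conj_step U L hU hU']
    congr 3 <;>
    simp only [Matrix.mul_assoc, h1, h2, hU, hU', Matrix.mul_one]

lemma traceConjAux {n : ℕ} (U N Y : Matrix (Fin n) (Fin n) ℂ) :
    (U * N * star U * Y).trace = (N * (star U * Y * U)).trace := by
  rw [Matrix.trace_mul_cycle, Matrix.trace_mul_cycle, ← Matrix.mul_assoc,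
    Matrix.trace_mul_comm]

/-- `γ(-ad A)` applied to `Y`, where `ad A (Y) = A*Y - Y*A`,
`γ(B) = ∑_{m ≥ 0} B^m / (m+1)!`. -/
noncomputable def gammaNegAd {n : ℕ} (A Y : Matrix (Fin n) (Fin n) ℂ) :
    Matrix (Fin n) (Fin n) ℂ :=
  ∑' m : ℕ, (((m + 1).factorial : ℂ))⁻¹ • ((fun Z => Z * A - A * Z)^[m] Y)

lemma gammaNegAd_eq {n : ℕ} (U L : Matrix (Fin n) (Fin n) ℂ) (d : Fin n → ℝ)
    (hL : L = diagonal (fun k => (d k : ℂ)))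
    (hU : U * star U = 1) (hU' : star U * U = 1) (Y : Matrix (Fin n) (Fin n) ℂ) :
    gammaNegAd (U * L * star U) Y
      = U * (Matrix.of fun i j =>
          ((gAux (d j - d i) : ℝ) : ℂ) * (star U * Y * U) i j) * star U := by
  subst hL
  have hcont : Continuous (fun Z : Matrix (Fin n) (Fin n) ℂ => U * Z * star U) :=
    (continuous_const.matrix_mul continuous_id).matrix_mul continuous_const
  have h := (hasSum_diag d (star U * Y * U)).map
    (AddMonoidHom.mk' (fun Z : Matrix (Fin n) (Fin n) ℂ => U * Z * star U)
      (fun a b => by rw [Matrix.mul_add, Matrix.add_mul])) hcont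
  rw [gammaNegAd]
  refine HasSum.tsum_eq ?_
  convert h using 1
  funext m
  simp only [Function.comp_apply, AddMonoidHom.mk'_apply]
  rw [conj_iter U _ hU hU', Matrix.mul_smul, Matrix.smul_mul]
  rfl

lemma trace_conjT {n : ℕ} (P Q : Matrix (Fin n) (Fin n) ℂ) :
    (Pᴴ * Q).trace = ∑ j, ∑ i, (starRingEnd ℂ) (P i j) * Q i j := by
  simp [Matrix.trace, Matrix.diag, Matrix.mul_apply, Matrix.conjTranspose_apply]

lemma conjT_conj {n : ℕ} (U M : Matrix (Fin n) (Fin n) ℂ) :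
    (U * M * star U)ᴴ = U * Mᴴ * star U := by
  simp only [← Matrix.star_eq_conjTranspose, Matrix.star_mul, star_star, Matrix.mul_assoc]

lemma star_conj_star {n : ℕ} (U X : Matrix (Fin n) (Fin n) ℂ) :
    star U * Xᴴ * U = (star U * X * U)ᴴ := by
  simp only [← Matrix.star_eq_conjTranspose, Matrix.star_mul, star_star, Matrix.mul_assoc]

theorem stmt8 {n : ℕ} (A : Matrix (Fin n) (Fin n) ℂ) (hA : A.IsHermitian) :
    (∀ X Y : Matrix (Fin n) (Fin n) ℂ,
      ((gammaNegAd A X)ᴴ * Y).trace = (Xᴴ * gammaNegAd A Y).trace) ∧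
    (∀ X : Matrix (Fin n) (Fin n) ℂ,
      0 ≤ ((Xᴴ * gammaNegAd A X).trace).re ∧ ((Xᴴ * gammaNegAd A X).trace).im = 0) := by
  set U : Matrix (Fin n) (Fin n) ℂ := (hA.eigenvectorUnitary : Matrix (Fin n) (Fin n) ℂ) with hUdef
  have hU : U * star U = 1 := mem_unitaryGroup_iff.mp (hA.eigenvectorUnitary).2
  have hU2 : star U * U = 1 := mem_unitaryGroup_iff'.mp (hA.eigenvectorUnitary).2
  set d : Fin n → ℝ := hA.eigenvalues with hd
  have hAeq : A = U * diagonal (fun k => (d k : ℂ)) * star U := hA.spectral_theorem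
  have key : ∀ Y, gammaNegAd A Y
      = U * (Matrix.of fun i j =>
          ((gAux (d j - d i) : ℝ) : ℂ) * (star U * Y * U) i j) * star U := by
    intro Y
    conv_lhs => rw [hAeq]
    exact gammaNegAd_eq U _ d rfl hU hU2 Y
  have hR : ∀ M X : Matrix (Fin n) (Fin n) ℂ,
      (Xᴴ * (U * M * star U)).trace = ((star U * X * U)ᴴ * M).trace := by
    intro M X
    rw [Matrix.trace_mul_comm, traceConjAux, ← star_conj_star, Matrix.trace_mul_comm,
      star_conj_star]
  constructor
  · intro X Y
    rw [key X, key Y, conjT_conj, traceConjAux, hR, trace_conjT, trace_conjT]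
    refine Finset.sum_congr rfl fun j _ => Finset.sum_congr rfl fun i _ => ?_
    simp only [Matrix.of_apply, Matrix.conjTranspose_apply, _root_.map_mul, Complex.conj_ofReal]
    ring
  · intro X
    have htr : (Xᴴ * gammaNegAd A X).trace
        = ((∑ j, ∑ i, gAux (d j - d i) * Complex.normSq ((star U * X * U) i j) : ℝ) : ℂ) := by
      rw [key X, hR, trace_conjT]
      push_cast
      refine Finset.sum_congr rfl fun j _ => Finset.sum_congr rfl fun i _ => ?_
      simp only [Matrix.of_apply]
      rw [Complex.normSq_eq_conj_mul_self]
      ring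
    rw [htr]
    constructor
    · rw [Complex.ofReal_re]
      refine Finset.sum_nonneg fun j _ => Finset.sum_nonneg fun i _ => ?_
      exact mul_nonneg (gAux_nonneg _) (Complex.normSq_nonneg _)
    · rw [Complex.ofReal_im]
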